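/- (Regret bound of Generalized FTPL with uniform perturbations) Suppose Γ is (κ,δ)-admissible with κ ≥ 1 and 0 < δ ≤ 1, let ε ≥ 0, set η = √(δ / ((1+2ε)Tκ)), let α = (α_1,…,α_N) have independent coordinates each uniformly distributed on [0, 1/η], and suppose that for every α the sequence x_1(α),…,x_{T+1}(α) is an ε-approximate Generalized-FTPL trajectory for α, with each map α ↦ x_t(α) measurable. Then E[ max_{x∈X} Σ_{t=1}^T f(x, y_t) − Σ_{t=1}^T f(x_t(α), y_t) ] ≤ 3N√((1+2ε)Tκ/δ) + εT. -/

import Mathlib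

open Finset MeasureTheory
open scoped ENNReal NNReal


lemma vol_le_of_diam {S : Set ℝ} {L : ℝ}
    (h : ∀ a ∈ S, ∀ b ∈ S, |a - b| ≤ L) : volume S ≤ ENNReal.ofReal L := by
  rcases S.eq_empty_or_nonempty with rfl | ⟨a0, ha0⟩
  · simp
  · have hbdd : BddBelow S := by
      refine ⟨a0 - L, fun a ha => ?_⟩
      have := abs_le.mp (h a ha a0 ha0)
      linarith [this.1, this.2]
    have hbd : ∀ b ∈ S, b - L ≤ sInf S := by
      intro b hb
      apply le_csInf ⟨a0, ha0⟩
      intro a ha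
      have := abs_le.mp (h a ha b hb)
      linarith [this.1, this.2]
    have hS : S ⊆ Set.Icc (sInf S) (sInf S + L) := by
      intro b hb
      exact ⟨csInf_le hbdd hb, by linarith [hbd b hb]⟩
    calc volume S ≤ volume (Set.Icc (sInf S) (sInf S + L)) := measure_mono hS
      _ = ENNReal.ofReal L := by rw [Real.volume_Icc]; ring_nf

lemma pi_measure_le_of_slice {N : ℕ} (D : Measure ℝ) [IsProbabilityMeasure D]
    (j : Fin N) {E : Set (Fin N → ℝ)} (hE : MeasurableSet E) {C : ℝ≥0∞}
    (h : ∀ g : Fin N → ℝ, D {a | Function.update g j a ∈ E} ≤ C) :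
    Measure.pi (fun _ : Fin N => D) E ≤ C := by
  have hf : Measurable (E.indicator (1 : (Fin N → ℝ) → ℝ≥0∞)) := measurable_one.indicator hE
  have key : ∫⁻ α, E.indicator (1 : (Fin N → ℝ) → ℝ≥0∞) α ∂(Measure.pi fun _ : Fin N => D)
      ≤ ∫⁻ _, C ∂(Measure.pi fun _ : Fin N => D) := by
    apply lintegral_le_of_lmarginal_le {j} hf measurable_const
    intro x
    rw [lmarginal_singleton, lmarginal_singleton]
    have heq : ∀ a : ℝ, E.indicator (1 : (Fin N → ℝ) → ℝ≥0∞) (Function.update x j a)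
        = (Function.update x j ⁻¹' E).indicator (1 : ℝ → ℝ≥0∞) a := by
      intro a; rfl
    simp_rw [heq]
    rw [lintegral_indicator_one (hE.preimage (measurable_update x))]
    have hpre : Function.update x j ⁻¹' E = {a | Function.update x j a ∈ E} := rfl
    rw [hpre]
    calc D {a | Function.update x j a ∈ E} ≤ C := h x
      _ = ∫⁻ _, C ∂D := by simp
  rw [lintegral_indicator_one hE] at key
  simpa using key

lemma ftpl_arith (T N κ : ℕ) (hT : 1 ≤ T) (hN : 1 ≤ N) (hκ : 1 ≤ κ)
    (δ ε η s : ℝ) (hδ0 : 0 < δ) (hδ1 : δ ≤ 1) (hε : 0 ≤ ε) (hε1 : ε ≤ 1)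
    (hs : s = Real.sqrt ((1+2*ε)*T*κ/δ)) (hη : η = 1/s) :
    (N:ℝ)*(1/η) + ((T:ℝ)+1)*ε
      + T * min 1 ((N:ℝ) * (η*((2*(κ:ℝ)-2)*((1+2*ε)/δ)))) ≤ 3*N*s + ε*T := by
  have hT1 : (1:ℝ) ≤ T := by exact_mod_cast hT
  have hN1 : (1:ℝ) ≤ N := by exact_mod_cast hN
  have hκ1 : (1:ℝ) ≤ κ := by exact_mod_cast hκ
  have hκ0 : (0:ℝ) < κ := by linarith
  have hQpos : 0 < (1+2*ε)*T*κ/δ := by positivity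
  have hspos : 0 < s := by rw [hs]; exact Real.sqrt_pos.mpr hQpos
  have hQ : s^2 = (1+2*ε)*T*κ/δ := by rw [hs, Real.sq_sqrt hQpos.le]
  have hQ' : (1+2*ε)*(T:ℝ)*κ = s^2*δ := by field_simp at hQ; linarith
  have hinv : 1/η = s := by rw [hη]; field_simp
  have hηpos : 0 < η := by rw [hη]; positivity
  rw [hinv]
  clear hs hQ hQpos hinv
  have key : (T:ℝ)*((N:ℝ) * (η*((2*(κ:ℝ)-2)*((1+2*ε)/δ)))) = 2*N*s - 2*N*s/κ := by
    rw [hη]; field_simp; linear_combination ((κ:ℝ)-1)*hQ'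
  rcases le_or_gt (ε*κ) (2*N*s) with hc | hc
  · have h1 : (T:ℝ) * min 1 ((N:ℝ) * (η*((2*(κ:ℝ)-2)*((1+2*ε)/δ))))
        ≤ 2*N*s - 2*N*s/κ := by
      rw [← key]
      exact mul_le_mul_of_nonneg_left (min_le_right _ _) (by positivity)
    have h2 : ε ≤ 2*N*s/κ := by
      rw [le_div_iff₀ hκ0]; linarith
    linarith
  · have h1 : (T:ℝ) * min 1 ((N:ℝ) * (η*((2*(κ:ℝ)-2)*((1+2*ε)/δ)))) ≤ T := by
      calc (T:ℝ) * min 1 ((N:ℝ) * (η*((2*(κ:ℝ)-2)*((1+2*ε)/δ)))) ≤ T * 1 :=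
        mul_le_mul_of_nonneg_left (min_le_left _ _) (by positivity)
      _ = T := mul_one _
    have hNs : 2*s ≤ 2*N*s := by nlinarith
    have hκs : (κ:ℝ) > 2*s := by nlinarith
    have hTκ : (0:ℝ) < (T:ℝ)*κ := by positivity
    have hs2 : s^2 ≥ (T:ℝ)*κ := by
      nlinarith [hQ', hTκ]
    have hs2T : s > 2*T := by nlinarith [mul_lt_mul_of_pos_left hκs (show (0:ℝ) < (T:ℝ) by linarith)]
    linarith
lemma ftpl_slice_bound
    {X : Type*} [Fintype X] [Nonempty X]
    {N : ℕ} (Γ : X → Fin N → ℝ) (c c' : X → ℝ) (j : Fin N)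
    (δ ε : ℝ) (hδ0 : 0 < δ) (hε : 0 ≤ ε)
    (hgap : ∀ x x', Γ x j ≠ Γ x' j → δ ≤ |Γ x j - Γ x' j|)
    (hc' : ∀ x, c x ≤ c' x ∧ c' x ≤ c x + 1)
    (κ : ℕ) (hκ : 1 ≤ κ) (hcol : (univ.image fun x => Γ x j).card ≤ κ)
    (xt xt1 : ℝ → X)
    (h1 : ∀ (a : ℝ) (x' : X), c (xt a) + a * Γ (xt a) j ≥ c x' + a * Γ x' j - ε)
    (h2 : ∀ (a : ℝ) (x' : X), c' (xt1 a) + a * Γ (xt1 a) j ≥ c' x' + a * Γ x' j - ε) :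
    volume {a : ℝ | Γ (xt a) j ≠ Γ (xt1 a) j}
      ≤ ENNReal.ofReal ((2*(κ:ℝ)-2)*((1+2*ε)/δ)) := by
  classical
  set vals : Finset ℝ := univ.image fun x => Γ x j with hvals
  have hvne : vals.Nonempty := (univ_nonempty).image _
  set b : ℝ → ℝ := fun v =>
    if h : (univ.filter fun x => Γ x j = v).Nonempty
    then (univ.filter fun x => Γ x j = v).sup' h c else 0 with hbdef
  have hb1 : ∀ x : X, c x ≤ b (Γ x j) := by
    intro x
    have hne : (univ.filter fun x' => Γ x' j = Γ x j).Nonempty :=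
      ⟨x, by simp⟩
    rw [hbdef]; simp only [dif_pos hne]
    exact le_sup' c (by simp)
  have hb2 : ∀ v ∈ vals, ∃ x : X, Γ x j = v ∧ b v = c x := by
    intro v hv
    obtain ⟨x, _, hx⟩ := mem_image.mp hv
    have hne : (univ.filter fun x' => Γ x' j = v).Nonempty := ⟨x, by simp [hx]⟩
    obtain ⟨x', hx', hsup⟩ := Finset.exists_mem_eq_sup' hne c
    refine ⟨x', (mem_filter.mp hx').2, ?_⟩
    rw [hbdef]; simp only [dif_pos hne]; exact hsup
  have hgapv : ∀ v ∈ vals, ∀ w ∈ vals, v ≠ w → δ ≤ |v - w| := by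
    intro v hv w hw hne
    obtain ⟨x, _, hx⟩ := mem_image.mp hv
    obtain ⟨x', _, hx'⟩ := mem_image.mp hw
    subst hx hx'
    exact hgap x x' hne
  set L : ℝ := (1+2*ε)/δ with hL
  set Ap : ℝ → Set ℝ := fun v => {a : ℝ |
    (∃ w ∈ vals, v < w ∧ b v + a*v - (1+ε) ≤ b w + a*w) ∧
    (∀ w ∈ vals, v < w → b w + a*w ≤ b v + a*v + ε)} with hAp
  set Am : ℝ → Set ℝ := fun v => {a : ℝ |
    (∃ w ∈ vals, w < v ∧ b v + a*v - (1+ε) ≤ b w + a*w) ∧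
    (∀ w ∈ vals, w < v → b w + a*w ≤ b v + a*v + ε)} with hAm
  -- diameter bounds
  have hdiamp : ∀ v ∈ vals, ∀ a₁ ∈ Ap v, ∀ a₂ ∈ Ap v, |a₁ - a₂| ≤ L := by
    intro v hv a₁ h₁ a₂ h₂
    have key : ∀ b₁ ∈ Ap v, ∀ b₂ ∈ Ap v, b₁ ≤ b₂ → b₂ - b₁ ≤ L := by
      intro b₁ hb₁ b₂ hb₂ hle
      obtain ⟨⟨w, hw, hvw, hex⟩, _⟩ := hb₁
      obtain ⟨_, huniv⟩ := hb₂
      have hub := huniv w hw hvw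
      have hgw : δ ≤ w - v := by
        have := hgapv v hv w hw (ne_of_lt hvw)
        rw [abs_sub_comm, abs_of_pos (by linarith)] at this
        linarith
      have hkey : (b₂ - b₁) * (w - v) ≤ 1 + 2*ε := by nlinarith
      rw [hL, le_div_iff₀ hδ0]
      nlinarith
    rcases le_total a₁ a₂ with hle | hle
    · rw [abs_sub_comm, abs_of_nonneg (by linarith)]; exact key a₁ h₁ a₂ h₂ hle
    · rw [abs_of_nonneg (by linarith)]; exact key a₂ h₂ a₁ h₁ hle
  have hdiamm : ∀ v ∈ vals, ∀ a₁ ∈ Am v, ∀ a₂ ∈ Am v, |a₁ - a₂| ≤ L := by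
    intro v hv a₁ h₁ a₂ h₂
    have key : ∀ b₁ ∈ Am v, ∀ b₂ ∈ Am v, b₁ ≤ b₂ → b₂ - b₁ ≤ L := by
      intro b₁ hb₁ b₂ hb₂ hle
      obtain ⟨⟨w, hw, hwv, hex⟩, _⟩ := hb₂
      obtain ⟨_, huniv⟩ := hb₁
      have hub := huniv w hw hwv
      have hgw : δ ≤ v - w := by
        have := hgapv v hv w hw (ne_of_gt hwv)
        rw [abs_of_pos (by linarith)] at this
        linarith
      have hkey : (b₂ - b₁) * (v - w) ≤ 1 + 2*ε := by nlinarith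
      rw [hL, le_div_iff₀ hδ0]
      nlinarith
    rcases le_total a₁ a₂ with hle | hle
    · rw [abs_sub_comm, abs_of_nonneg (by linarith)]; exact key a₁ h₁ a₂ h₂ hle
    · rw [abs_of_nonneg (by linarith)]; exact key a₂ h₂ a₁ h₁ hle
  -- inclusion
  have hincl : {a : ℝ | Γ (xt a) j ≠ Γ (xt1 a) j} ⊆ ⋃ v ∈ vals, (Ap v ∪ Am v) := by
    intro a ha
    simp only [Set.mem_setOf_eq] at ha
    set v := Γ (xt a) j with hv
    set v' := Γ (xt1 a) j with hv'
    have hvmem : v ∈ vals := mem_image.mpr ⟨xt a, mem_univ _, rfl⟩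
    have hv'mem : v' ∈ vals := mem_image.mpr ⟨xt1 a, mem_univ _, rfl⟩
    have huniv : ∀ w ∈ vals, b w + a*w ≤ b v + a*v + ε := by
      intro w hw
      obtain ⟨xw, hxw, hbw⟩ := hb2 w hw
      have := h1 a xw
      rw [hxw] at this
      have hcb := hb1 (xt a)
      rw [← hv] at hcb
      rw [hbw]
      linarith
    have hex : b v + a*v - (1+ε) ≤ b v' + a*v' := by
      obtain ⟨xv, hxv, hbv⟩ := hb2 v hvmem
      have h2' := h2 a xv
      rw [hxv] at h2'
      have hcb1 := hb1 (xt1 a)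
      rw [← hv'] at hcb1
      have hcv := (hc' xv).1
      have hcx1 := (hc' (xt1 a)).2
      rw [hbv]
      linarith
    apply Set.mem_biUnion hvmem
    rcases lt_trichotomy v v' with hlt | heq | hgt
    · left
      exact ⟨⟨v', hv'mem, hlt, hex⟩, fun w hw hvw => huniv w hw⟩
    · exact absurd heq ha
    · right
      exact ⟨⟨v', hv'mem, hgt, hex⟩, fun w hw hvw => huniv w hw⟩
  -- volume computation
  have hLnn : 0 ≤ L := by rw [hL]; positivity
  set vmax := vals.max' hvne with hvmax
  set vmin := vals.min' hvne with hvmin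
  have hApmax : Ap vmax = ∅ := by
    ext a
    simp only [hAp, Set.mem_setOf_eq, Set.mem_empty_iff_false, iff_false]
    rintro ⟨⟨w, hw, hlt, -⟩, -⟩
    exact absurd (le_max' vals w hw) (not_le.mpr hlt)
  have hAmmin : Am vmin = ∅ := by
    ext a
    simp only [hAm, Set.mem_setOf_eq, Set.mem_empty_iff_false, iff_false]
    rintro ⟨⟨w, hw, hlt, -⟩, -⟩
    exact absurd (min'_le vals w hw) (not_le.mpr hlt)
  have hsump : ∑ v ∈ vals, volume (Ap v) ≤ ((κ:ℝ≥0∞) - 1) * ENNReal.ofReal L := by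
    rw [← Finset.sum_erase_add vals _ (max'_mem vals hvne), ← hvmax, hApmax]
    simp only [measure_empty, add_zero]
    calc ∑ v ∈ vals.erase vmax, volume (Ap v)
        ≤ ∑ _v ∈ vals.erase vmax, ENNReal.ofReal L := by
          apply Finset.sum_le_sum
          intro v hv
          exact vol_le_of_diam (hdiamp v (mem_of_mem_erase hv))
      _ = (vals.erase vmax).card * ENNReal.ofReal L := by
          rw [Finset.sum_const, nsmul_eq_mul]
      _ ≤ ((κ:ℝ≥0∞) - 1) * ENNReal.ofReal L := by
          apply mul_le_mul_left
          rw [card_erase_of_mem (max'_mem vals hvne)]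
          have h1' : (vals.card - 1 : ℕ) ≤ κ - 1 := by omega
          calc ((vals.card - 1 : ℕ) : ℝ≥0∞) ≤ ((κ - 1 : ℕ) : ℝ≥0∞) := by
                exact_mod_cast Nat.cast_le.mpr h1'
            _ = (κ:ℝ≥0∞) - 1 := by
                rw [ENNReal.natCast_sub]; norm_num
  have hsumm : ∑ v ∈ vals, volume (Am v) ≤ ((κ:ℝ≥0∞) - 1) * ENNReal.ofReal L := by
    rw [← Finset.sum_erase_add vals _ (min'_mem vals hvne), ← hvmin, hAmmin]
    simp only [measure_empty, add_zero]
    calc ∑ v ∈ vals.erase vmin, volume (Am v)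
        ≤ ∑ _v ∈ vals.erase vmin, ENNReal.ofReal L := by
          apply Finset.sum_le_sum
          intro v hv
          exact vol_le_of_diam (hdiamm v (mem_of_mem_erase hv))
      _ = (vals.erase vmin).card * ENNReal.ofReal L := by
          rw [Finset.sum_const, nsmul_eq_mul]
      _ ≤ ((κ:ℝ≥0∞) - 1) * ENNReal.ofReal L := by
          apply mul_le_mul_left
          rw [card_erase_of_mem (min'_mem vals hvne)]
          have h1' : (vals.card - 1 : ℕ) ≤ κ - 1 := by omega
          calc ((vals.card - 1 : ℕ) : ℝ≥0∞) ≤ ((κ - 1 : ℕ) : ℝ≥0∞) := by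
                exact_mod_cast Nat.cast_le.mpr h1'
            _ = (κ:ℝ≥0∞) - 1 := by
                rw [ENNReal.natCast_sub]; norm_num
  calc volume {a : ℝ | Γ (xt a) j ≠ Γ (xt1 a) j}
      ≤ volume (⋃ v ∈ vals, (Ap v ∪ Am v)) := measure_mono hincl
    _ ≤ ∑ v ∈ vals, volume (Ap v ∪ Am v) := measure_biUnion_finset_le _ _
    _ ≤ ∑ v ∈ vals, (volume (Ap v) + volume (Am v)) :=
        Finset.sum_le_sum fun v _ => measure_union_le _ _
    _ = ∑ v ∈ vals, volume (Ap v) + ∑ v ∈ vals, volume (Am v) := Finset.sum_add_distrib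
    _ ≤ ((κ:ℝ≥0∞) - 1) * ENNReal.ofReal L + ((κ:ℝ≥0∞) - 1) * ENNReal.ofReal L :=
        add_le_add hsump hsumm
    _ = (((κ - 1 : ℕ) : ℝ≥0∞) + ((κ - 1 : ℕ) : ℝ≥0∞)) * ENNReal.ofReal L := by
        rw [ENNReal.natCast_sub, add_mul]; norm_num
    _ = ENNReal.ofReal ((2*(κ:ℝ)-2)*L) := by
        rw [← ENNReal.ofReal_natCast, ← ENNReal.ofReal_add (by positivity) (by positivity),
          ← ENNReal.ofReal_mul (by positivity)]
        congr 1
        rw [Nat.cast_sub hκ]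
        push_cast
        ring

/-- **Regret bound of Generalized FTPL with uniform perturbations.**
If `Γ` is `(κ,δ)`-admissible, `η = √(δ/((1+2ε)Tκ))`, and the coordinates of `α` are
i.i.d. uniform on `[0, 1/η]`, then for any family of ε-approximate Generalized-FTPL
trajectories `xtraj`:
`E[ max_x Σ_t f(x,y_t) − Σ_t f(x_t(α),y_t) ] ≤ 3N√((1+2ε)Tκ/δ) + εT`. -/
theorem ftpl_uniform_regret
    {X Y : Type*} [Fintype X] [Nonempty X]
    (f : X → Y → ℝ) (hf : ∀ x y, f x y ∈ Set.Icc (0:ℝ) 1)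
    (T : ℕ) (hT : 1 ≤ T) (y : ℕ → Y)
    (N : ℕ) (hN : 1 ≤ N)
    (Γ : X → Fin N → ℝ) (hΓ : ∀ x j, Γ x j ∈ Set.Icc (0:ℝ) 1)
    (κ : ℕ) (hκ : 1 ≤ κ) (δ : ℝ) (hδ0 : 0 < δ) (hδ1 : δ ≤ 1)
    -- (κ,δ)-admissibility:
    (hrows : ∀ x x' : X, x ≠ x' → ∃ j, Γ x j ≠ Γ x' j)
    (hcol : ∀ j : Fin N, (Finset.univ.image fun x => Γ x j).card ≤ κ)
    (hgap : ∀ (j : Fin N) (x x' : X), Γ x j ≠ Γ x' j → δ ≤ |Γ x j - Γ x' j|)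
    (ε : ℝ) (hε : 0 ≤ ε)
    (η : ℝ) (hη : η = Real.sqrt (δ / ((1 + 2*ε) * T * κ)))
    (D : Measure ℝ)
    (hD : D = ENNReal.ofReal η • volume.restrict (Set.Icc (0:ℝ) (1/η)))
    (xtraj : (Fin N → ℝ) → ℕ → X)
    (hmeas : ∀ (t : ℕ) (x₀ : X), MeasurableSet {α : Fin N → ℝ | xtraj α t = x₀})
    (htraj : ∀ (α : Fin N → ℝ) (t : ℕ), 1 ≤ t → t ≤ T + 1 → ∀ x' : X,
      (∑ τ ∈ Finset.Icc 1 (t-1), f (xtraj α t) (y τ)) + (∑ j, α j * Γ (xtraj α t) j) ≥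
      (∑ τ ∈ Finset.Icc 1 (t-1), f x' (y τ)) + (∑ j, α j * Γ x' j) - ε) :
    ∫ α, ((Finset.univ.sup' Finset.univ_nonempty fun x => ∑ t ∈ Finset.Icc 1 T, f x (y t)) -
          ∑ t ∈ Finset.Icc 1 T, f (xtraj α t) (y t))
        ∂(Measure.pi fun _ : Fin N => D) ≤
      3 * N * Real.sqrt ((1 + 2*ε) * T * κ / δ) + ε * T := by
  classical
  set μ : Measure (Fin N → ℝ) := Measure.pi fun _ : Fin N => D with hμdef
  have hT1 : (1:ℝ) ≤ T := by exact_mod_cast hT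
  have hN1 : (1:ℝ) ≤ N := by exact_mod_cast hN
  have hκ1 : (1:ℝ) ≤ κ := by exact_mod_cast hκ
  have hQpos : (0:ℝ) < (1 + 2*ε) * T * κ / δ := by positivity
  have hApos : (0:ℝ) < δ / ((1 + 2*ε) * T * κ) := by positivity
  have hηpos : 0 < η := by rw [hη]; exact Real.sqrt_pos.mpr hApos
  have hηinv : 1/η = Real.sqrt ((1 + 2*ε) * T * κ / δ) := by
    rw [hη, one_div, ← Real.sqrt_inv, inv_div]
  -- D is a probability measure
  have hDIcc : D (Set.Icc (0:ℝ) (1/η)) = 1 := by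
    rw [hD]
    simp only [Measure.smul_apply, smul_eq_mul]
    rw [Measure.restrict_apply' measurableSet_Icc, Set.inter_self, Real.volume_Icc]
    rw [← ENNReal.ofReal_mul hηpos.le]
    rw [show η * (1/η - 0) = 1 by field_simp; ring]
    exact ENNReal.ofReal_one
  have hDuniv : D Set.univ = 1 := by
    rw [hD]
    simp only [Measure.smul_apply, smul_eq_mul]
    rw [Measure.restrict_apply' measurableSet_Icc, Set.univ_inter, Real.volume_Icc]
    rw [← ENNReal.ofReal_mul hηpos.le]
    rw [show η * (1/η - 0) = 1 by field_simp; ring]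
    exact ENNReal.ofReal_one
  haveI hDprob : IsProbabilityMeasure D := ⟨hDuniv⟩
  haveI hμprob : IsProbabilityMeasure μ := by rw [hμdef]; infer_instance
  -- integrability helper
  have hint : ∀ (t : ℕ) (c : X → ℝ), Integrable (fun α => c (xtraj α t)) μ := by
    intro t c
    have heq : (fun α => c (xtraj α t))
        = fun α => ∑ x : X, Set.indicator {β | xtraj β t = x} (fun _ => c x) α := by
      funext α
      simp only [Set.indicator_apply, Set.mem_setOf_eq]
      rw [Finset.sum_ite_eq univ (xtraj α t) (fun x => c x)]
      simp
    rw [heq]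
    exact integrable_finset_sum _ (fun x _ => (integrable_const (c x)).indicator (hmeas t x))

  -- measurability of switch events
  have hEmeas : ∀ (t : ℕ) (j : Fin N),
      MeasurableSet {α : Fin N → ℝ | Γ (xtraj α t) j ≠ Γ (xtraj α (t+1)) j} := by
    intro t j
    have heq : {α : Fin N → ℝ | Γ (xtraj α t) j ≠ Γ (xtraj α (t+1)) j}
        = ⋃ (x : X), ⋃ (x' : X), ⋃ (_ : Γ x j ≠ Γ x' j),
            ({α | xtraj α t = x} ∩ {α | xtraj α (t+1) = x'}) := by
      ext α
      simp only [Set.mem_setOf_eq, Set.mem_iUnion, Set.mem_inter_iff]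
      constructor
      · intro h; exact ⟨_, _, h, rfl, rfl⟩
      · rintro ⟨x, x', h, h1, h2⟩; rw [h1, h2]; exact h
    rw [heq]
    exact MeasurableSet.iUnion fun x => MeasurableSet.iUnion fun x' =>
      MeasurableSet.iUnion fun _ => (hmeas t x).inter (hmeas (t+1) x')
  -- per-round, per-column switch probability bound
  have hswitch : ∀ t : ℕ, 1 ≤ t → t ≤ T → ∀ j : Fin N,
      μ {α | Γ (xtraj α t) j ≠ Γ (xtraj α (t+1)) j}
        ≤ ENNReal.ofReal (η * ((2*(κ:ℝ)-2)*((1+2*ε)/δ))) := by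
    intro t ht1 htT j
    obtain ⟨u, rfl⟩ : ∃ u, t = u + 1 := ⟨t - 1, by omega⟩
    rw [hμdef]
    apply pi_measure_le_of_slice D j (hEmeas (u+1) j)
    intro g
    set c : X → ℝ := fun x =>
      (∑ τ ∈ Finset.Icc 1 u, f x (y τ)) + ∑ j' ∈ univ.erase j, g j' * Γ x j' with hcdef
    set c' : X → ℝ := fun x => c x + f x (y (u+1)) with hc'def
    have hdecomp : ∀ (a : ℝ) (x : X),
        (∑ j', Function.update g j a j' * Γ x j') = (∑ j' ∈ univ.erase j, g j' * Γ x j') + a * Γ x j := by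
      intro a x
      rw [← Finset.sum_erase_add _ _ (mem_univ j), Function.update_self]
      congr 1
      exact Finset.sum_congr rfl (fun j' hj' => by rw [Function.update_of_ne (mem_erase.mp hj').1])
    have hA : ∀ (a : ℝ) (x' : X),
        c (xtraj (Function.update g j a) (u+1)) + a * Γ (xtraj (Function.update g j a) (u+1)) j
          ≥ c x' + a * Γ x' j - ε := by
      intro a x'
      have h := htraj (Function.update g j a) (u+1) (by omega) (by omega) x'
      simp only [Nat.add_sub_cancel] at h
      rw [hdecomp a (xtraj (Function.update g j a) (u+1)), hdecomp a x'] at h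
      simp only [hcdef]
      linarith
    have hB : ∀ (a : ℝ) (x' : X),
        c' (xtraj (Function.update g j a) (u+2)) + a * Γ (xtraj (Function.update g j a) (u+2)) j
          ≥ c' x' + a * Γ x' j - ε := by
      intro a x'
      have h := htraj (Function.update g j a) (u+2) (by omega) (by omega) x'
      have e21 : u + 2 - 1 = u + 1 := by omega
      rw [e21] at h
      rw [hdecomp a (xtraj (Function.update g j a) (u+2)), hdecomp a x'] at h
      have hsplit : ∀ x : X, ∑ τ ∈ Finset.Icc 1 (u+1), f x (y τ)
          = (∑ τ ∈ Finset.Icc 1 u, f x (y τ)) + f x (y (u+1)) :=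
        fun x => Finset.sum_Icc_succ_top (by omega) _
      rw [hsplit, hsplit] at h
      simp only [hc'def, hcdef]
      linarith
    have hslice := ftpl_slice_bound Γ c c' j δ ε hδ0 hε (fun x x' hne => hgap j x x' hne)
      (fun x => ⟨by simp [hc'def]; linarith [(hf x (y (u+1))).1],
                 by simp [hc'def]; linarith [(hf x (y (u+1))).2]⟩)
      κ hκ (hcol j)
      (fun a => xtraj (Function.update g j a) (u+1))
      (fun a => xtraj (Function.update g j a) (u+2))
      hA hB
    have hsetrfl : {a : ℝ | Function.update g j a ∈ {α : Fin N → ℝ | Γ (xtraj α (u+1)) j ≠ Γ (xtraj α (u+2)) j}}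
        = {a : ℝ | Γ (xtraj (Function.update g j a) (u+1)) j
            ≠ Γ (xtraj (Function.update g j a) (u+2)) j} := rfl
    rw [hsetrfl]
    calc D {a : ℝ | Γ (xtraj (Function.update g j a) (u+1)) j ≠ Γ (xtraj (Function.update g j a) (u+2)) j}
        = ENNReal.ofReal η * volume ({a : ℝ | Γ (xtraj (Function.update g j a) (u+1)) j
            ≠ Γ (xtraj (Function.update g j a) (u+2)) j} ∩ Set.Icc 0 (1/η)) := by
          rw [hD]
          simp only [Measure.smul_apply, smul_eq_mul]
          rw [Measure.restrict_apply' measurableSet_Icc]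
      _ ≤ ENNReal.ofReal η * volume {a : ℝ | Γ (xtraj (Function.update g j a) (u+1)) j
            ≠ Γ (xtraj (Function.update g j a) (u+2)) j} :=
          mul_le_mul_right (measure_mono Set.inter_subset_left) _
      _ ≤ ENNReal.ofReal η * ENNReal.ofReal ((2*(κ:ℝ)-2)*((1+2*ε)/δ)) :=
          mul_le_mul_right hslice _
      _ = ENNReal.ofReal (η * ((2*(κ:ℝ)-2)*((1+2*ε)/δ))) :=
          (ENNReal.ofReal_mul hηpos.le).symm
  -- expected one-step regret difference bound
  have hdiffint : ∀ t : ℕ,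
      Integrable (fun α => f (xtraj α (t+1)) (y t) - f (xtraj α t) (y t)) μ :=
    fun t => (hint (t+1) (fun x => f x (y t))).sub (hint t (fun x => f x (y t)))
  have hdiffbound : ∀ t : ℕ, 1 ≤ t → t ≤ T →
      ∫ α, (f (xtraj α (t+1)) (y t) - f (xtraj α t) (y t)) ∂μ
        ≤ min 1 ((N:ℝ) * (η*((2*(κ:ℝ)-2)*((1+2*ε)/δ)))) := by
    intro t ht1 htT
    apply le_min
    · calc ∫ α, (f (xtraj α (t+1)) (y t) - f (xtraj α t) (y t)) ∂μ
          ≤ ∫ _, (1:ℝ) ∂μ := by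
            apply integral_mono (hdiffint t) (integrable_const 1)
            intro α
            have h1 := hf (xtraj α (t+1)) (y t)
            have h2 := hf (xtraj α t) (y t)
            simp only [Set.mem_Icc] at h1 h2
            simp only
            linarith [h1.2, h2.1]
        _ = 1 := by simp
    · have hindint : Integrable (fun α => ∑ j : Fin N,
          Set.indicator {β : Fin N → ℝ | Γ (xtraj β t) j ≠ Γ (xtraj β (t+1)) j}
            (1 : (Fin N → ℝ) → ℝ) α) μ :=
        integrable_finset_sum _ (fun j _ => (integrable_const 1).indicator (hEmeas t j))
      calc ∫ α, (f (xtraj α (t+1)) (y t) - f (xtraj α t) (y t)) ∂μ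
          ≤ ∫ α, (∑ j : Fin N,
              Set.indicator {β : Fin N → ℝ | Γ (xtraj β t) j ≠ Γ (xtraj β (t+1)) j}
                (1 : (Fin N → ℝ) → ℝ) α) ∂μ := by
            apply integral_mono (hdiffint t) hindint
            intro α
            simp only
            by_cases hxx : xtraj α t = xtraj α (t+1)
            · rw [hxx]
              simp only [sub_self]
              exact Finset.sum_nonneg fun j _ => Set.indicator_nonneg (fun _ _ => zero_le_one) _
            · obtain ⟨j₀, hj₀⟩ := hrows _ _ hxx
              have hmem : α ∈ {β : Fin N → ℝ | Γ (xtraj β t) j₀ ≠ Γ (xtraj β (t+1)) j₀} := hj₀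
              have hle1 : f (xtraj α (t+1)) (y t) - f (xtraj α t) (y t) ≤ 1 := by
                have h1 := hf (xtraj α (t+1)) (y t)
                have h2 := hf (xtraj α t) (y t)
                simp only [Set.mem_Icc] at h1 h2
                linarith [h1.2, h2.1]
              calc f (xtraj α (t+1)) (y t) - f (xtraj α t) (y t) ≤ 1 := hle1
                _ = Set.indicator {β : Fin N → ℝ | Γ (xtraj β t) j₀ ≠ Γ (xtraj β (t+1)) j₀}
                    (1 : (Fin N → ℝ) → ℝ) α := by rw [Set.indicator_of_mem hmem]; rfl
                _ ≤ ∑ j : Fin N, Set.indicator {β : Fin N → ℝ | Γ (xtraj β t) j ≠ Γ (xtraj β (t+1)) j}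
                    (1 : (Fin N → ℝ) → ℝ) α :=
                  Finset.single_le_sum
                    (f := fun j => Set.indicator {β : Fin N → ℝ | Γ (xtraj β t) j ≠ Γ (xtraj β (t+1)) j}
                      (1 : (Fin N → ℝ) → ℝ) α)
                    (fun j _ => Set.indicator_nonneg (fun _ _ => zero_le_one) _) (mem_univ j₀)
        _ = ∑ j : Fin N, (μ {β : Fin N → ℝ | Γ (xtraj β t) j ≠ Γ (xtraj β (t+1)) j}).toReal := by
            rw [integral_finset_sum (μ := μ) univ
              (f := fun (j : Fin N) (α : Fin N → ℝ) => Set.indicator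
                {β : Fin N → ℝ | Γ (xtraj β t) j ≠ Γ (xtraj β (t+1)) j} (1 : (Fin N → ℝ) → ℝ) α)
              (fun j _ => (integrable_const 1).indicator (hEmeas t j))]
            exact Finset.sum_congr rfl fun j _ => integral_indicator_one (hEmeas t j)
        _ ≤ ∑ _j : Fin N, η*((2*(κ:ℝ)-2)*((1+2*ε)/δ)) := by
            apply Finset.sum_le_sum
            intro j _
            apply ENNReal.toReal_le_of_le_ofReal
            · have h2κ : (0:ℝ) ≤ 2*(κ:ℝ)-2 := by linarith
              positivity
            · exact hswitch t ht1 htT j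
        _ = (N:ℝ) * (η*((2*(κ:ℝ)-2)*((1+2*ε)/δ))) := by
            rw [Finset.sum_const, card_univ, Fintype.card_fin, nsmul_eq_mul]
  -- the box of perturbations
  set Box : Set (Fin N → ℝ) := Set.pi Set.univ (fun _ : Fin N => Set.Icc (0:ℝ) (1/η)) with hBoxdef
  have hBoxmeas : MeasurableSet Box := MeasurableSet.univ_pi (fun _ => measurableSet_Icc)
  have hBoxfull : μ Box = 1 := by
    rw [hμdef, hBoxdef, Measure.pi_pi]
    simp only [hDIcc, Finset.prod_const_one]
  have hBoxnull : μ Boxᶜ = 0 := by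
    rw [measure_compl hBoxmeas (measure_ne_top μ Box), hBoxfull]
    simp
  -- bounds on the perturbation term inside the box
  have hP0 : ∀ α ∈ Box, ∀ x : X, 0 ≤ ∑ j', α j' * Γ x j' := by
    intro α hα x
    apply Finset.sum_nonneg
    intro j' _
    exact mul_nonneg (hα j' (Set.mem_univ j')).1 (hΓ x j').1
  have hPub : ∀ α ∈ Box, ∀ x : X, ∑ j', α j' * Γ x j' ≤ N * (1/η) := by
    intro α hα x
    calc ∑ j', α j' * Γ x j' ≤ ∑ _j' : Fin N, (1/η) := by
          apply Finset.sum_le_sum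
          intro j' _
          have h1 := hα j' (Set.mem_univ j')
          have h2 := hΓ x j'
          calc α j' * Γ x j' ≤ α j' * 1 :=
                mul_le_mul_of_nonneg_left h2.2 h1.1
            _ = α j' := mul_one _
            _ ≤ 1/η := h1.2
      _ = N * (1/η) := by rw [Finset.sum_const, card_univ, Fintype.card_fin, nsmul_eq_mul]
  -- be-the-leader bound, pointwise on the box
  have hBTL : ∀ α ∈ Box, ∀ x : X,
      (∑ t ∈ Finset.Icc 1 T, f x (y t)) - (∑ t ∈ Finset.Icc 1 T, f (xtraj α (t+1)) (y t))
        ≤ (N:ℝ)*(1/η) + ((T:ℝ)+1)*ε := by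
    intro α hα x
    have claim : ∀ t : ℕ, t ≤ T →
        (∑ τ ∈ Finset.Icc 1 t, f (xtraj α (t+1)) (y τ))
          + (∑ j', α j' * Γ (xtraj α (t+1)) j') - (∑ j', α j' * Γ (xtraj α 1) j') - t*ε
        ≤ ∑ τ ∈ Finset.Icc 1 t, f (xtraj α (τ+1)) (y τ) := by
      intro t
      induction t with
      | zero =>
        intro _
        have hempty : Finset.Icc 1 0 = (∅ : Finset ℕ) := by
          apply Finset.Icc_eq_empty; omega
        rw [hempty]
        simp
      | succ u ih =>
        intro hu1
        have ihu := ih (by omega)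
        have hopt := htraj α (u+1) (by omega) (by omega) (xtraj α (u+2))
        simp only [Nat.add_sub_cancel] at hopt
        rw [Finset.sum_Icc_succ_top (show 1 ≤ u+1 by omega)
          (fun τ => f (xtraj α (u+2)) (y τ))]
        rw [Finset.sum_Icc_succ_top (show 1 ≤ u+1 by omega)
          (fun τ => f (xtraj α (τ+1)) (y τ))]
        push_cast
        linarith
    have hfin := htraj α (T+1) (by omega) (by omega) x
    simp only [Nat.add_sub_cancel] at hfin
    have hcl := claim T le_rfl
    have h0 := hP0 α hα x
    have hub := hPub α hα (xtraj α 1)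
    linarith
  -- the integrand and its dominating function
  set m : ℝ := min 1 ((N:ℝ) * (η*((2*(κ:ℝ)-2)*((1+2*ε)/δ)))) with hmdef
  set C0 : ℝ := (N:ℝ)*(1/η) + ((T:ℝ)+1)*ε with hC0def
  set R : (Fin N → ℝ) → ℝ := fun α =>
    (Finset.univ.sup' Finset.univ_nonempty fun x => ∑ t ∈ Finset.Icc 1 T, f x (y t)) -
          ∑ t ∈ Finset.Icc 1 T, f (xtraj α t) (y t) with hRdef
  set G : (Fin N → ℝ) → ℝ := fun α =>
    C0 + ∑ t ∈ Finset.Icc 1 T, (f (xtraj α (t+1)) (y t) - f (xtraj α t) (y t)) with hGdef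
  have hRint : Integrable R μ := by
    apply Integrable.sub (integrable_const _)
    exact integrable_finset_sum _ (fun t _ => hint t (fun x => f x (y t)))
  have hGint : Integrable G μ := by
    apply Integrable.add (integrable_const _)
    exact integrable_finset_sum _ (fun t _ => hdiffint t)
  have haeRG : ∀ᵐ α ∂μ, R α ≤ G α := by
    rw [Filter.eventually_iff, mem_ae_iff]
    apply measure_mono_null _ hBoxnull
    intro α hα
    simp only [Set.mem_compl_iff, Set.mem_setOf_eq] at *
    intro hBoxmem
    apply hα
    have hsup : (Finset.univ.sup' Finset.univ_nonempty fun x => ∑ t ∈ Finset.Icc 1 T, f x (y t))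
        ≤ C0 + ∑ t ∈ Finset.Icc 1 T, f (xtraj α (t+1)) (y t) := by
      apply Finset.sup'_le
      intro x _
      have := hBTL α hBoxmem x
      linarith
    have hsplit : ∑ t ∈ Finset.Icc 1 T, (f (xtraj α (t+1)) (y t) - f (xtraj α t) (y t))
        = (∑ t ∈ Finset.Icc 1 T, f (xtraj α (t+1)) (y t))
          - ∑ t ∈ Finset.Icc 1 T, f (xtraj α t) (y t) := Finset.sum_sub_distrib _ _
    calc R α = (Finset.univ.sup' Finset.univ_nonempty fun x => ∑ t ∈ Finset.Icc 1 T, f x (y t))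
          - ∑ t ∈ Finset.Icc 1 T, f (xtraj α t) (y t) := rfl
      _ ≤ C0 + ∑ t ∈ Finset.Icc 1 T, (f (xtraj α (t+1)) (y t) - f (xtraj α t) (y t)) := by
          rw [hsplit]; linarith
      _ = G α := rfl
  have hintegral : ∫ α, R α ∂μ ≤ C0 + T * m := by
    calc ∫ α, R α ∂μ ≤ ∫ α, G α ∂μ := integral_mono_ae hRint hGint haeRG
      _ = C0 + ∑ t ∈ Finset.Icc 1 T,
            ∫ α, (f (xtraj α (t+1)) (y t) - f (xtraj α t) (y t)) ∂μ := by
          rw [hGdef]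
          simp only
          rw [integral_add (integrable_const _) (integrable_finset_sum _ (fun t _ => hdiffint t))]
          rw [integral_const]
          simp only [probReal_univ, one_smul]
          congr 1
          exact integral_finset_sum _ (fun t _ => hdiffint t)
      _ ≤ C0 + ∑ _t ∈ Finset.Icc 1 T, m := by
          apply add_le_add_right
          apply Finset.sum_le_sum
          intro t ht
          rw [Finset.mem_Icc] at ht
          exact hdiffbound t ht.1 ht.2
      _ = C0 + T * m := by
          rw [Finset.sum_const, Nat.card_Icc, nsmul_eq_mul]
          norm_num
  rcases le_or_gt ε 1 with hε1 | hε1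
  · -- main case : apply the arithmetic lemma
    have harith := ftpl_arith T N κ hT hN hκ δ ε η (Real.sqrt ((1 + 2*ε) * T * κ / δ))
      hδ0 hδ1 hε hε1 rfl (by rw [← hηinv]; field_simp)
    calc ∫ α, R α ∂μ ≤ C0 + T * m := hintegral
      _ ≤ 3 * N * Real.sqrt ((1 + 2*ε) * T * κ / δ) + ε * T := by
          rw [hC0def, hmdef] at *
          linarith [harith]
  · -- trivial case : ε > 1
    have hRT : ∀ α, R α ≤ T := by
      intro α
      have hsup : (Finset.univ.sup' Finset.univ_nonempty fun x => ∑ t ∈ Finset.Icc 1 T, f x (y t))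
          ≤ (T:ℝ) := by
        apply Finset.sup'_le
        intro x _
        calc ∑ t ∈ Finset.Icc 1 T, f x (y t) ≤ ∑ _t ∈ Finset.Icc 1 T, (1:ℝ) :=
              Finset.sum_le_sum (fun t _ => (hf x (y t)).2)
          _ = (T:ℝ) := by rw [Finset.sum_const, Nat.card_Icc, nsmul_eq_mul]; norm_num
      have hnn : 0 ≤ ∑ t ∈ Finset.Icc 1 T, f (xtraj α t) (y t) :=
        Finset.sum_nonneg (fun t _ => (hf (xtraj α t) (y t)).1)
      simp only [hRdef]
      linarith
    have hsqrtnn : 0 ≤ 3 * (N:ℝ) * Real.sqrt ((1 + 2*ε) * T * κ / δ) := by positivity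
    calc ∫ α, R α ∂μ ≤ ∫ _, (T:ℝ) ∂μ := integral_mono hRint (integrable_const _) hRT
      _ = T := by simp
      _ ≤ ε * T := by nlinarith
      _ ≤ 3 * N * Real.sqrt ((1 + 2*ε) * T * κ / δ) + ε * T := by linarith
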